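/- Let L be a complete lattice in which every element is a supremum of compact elements, and let S be the set of compact elements of L (which is closed under finite joins and contains the least element of L, hence is a join-semilattice with least element under the induced order). Then the map sending x ∈ L to {s ∈ S : s ≤ x} is an order-isomorphism from L onto the set of ideals of S ordered by inclusion. -/

import Mathlib

/-- The December 2024 Mathlib definition of a compact element of a complete lattice
(Mathlib now names a different, directed-supremum definition `IsCompactElement`). -/
def CompleteLattice.IsCompactElement {α : Type*} [CompleteLattice α] (k : α) :=
  ∀ s : Set α, k ≤ sSup s → ∃ t : Finset α, ↑t ⊆ s ∧ k ≤ t.sup id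

/-- An ideal of the join-semilattice `S` of compact elements of `L`: a nonempty
subset of the set of compact elements which is a lower subset within the compact
elements and is closed under finite joins. -/
def IsCompactIdeal (L : Type*) [CompleteLattice L] (I : Set L) : Prop :=
  (∀ a ∈ I, CompleteLattice.IsCompactElement a) ∧ I.Nonempty ∧
    (∀ a : L, CompleteLattice.IsCompactElement a → ∀ b ∈ I, a ≤ b → a ∈ I) ∧
    (∀ a ∈ I, ∀ b ∈ I, a ⊔ b ∈ I)

lemma isCompactElement_bot' {L : Type*} [CompleteLattice L] :
    CompleteLattice.IsCompactElement (⊥ : L) := by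
  intro s _
  exact ⟨∅, by simp⟩

lemma isCompactElement_sup' {L : Type*} [CompleteLattice L] {a b : L}
    (ha : CompleteLattice.IsCompactElement a) (hb : CompleteLattice.IsCompactElement b) :
    CompleteLattice.IsCompactElement (a ⊔ b) := by
  classical
  intro s h
  obtain ⟨t1, h1, ha'⟩ := ha s (le_sup_left.trans h)
  obtain ⟨t2, h2, hb'⟩ := hb s (le_sup_right.trans h)
  refine ⟨t1 ∪ t2, by rw [Finset.coe_union]; exact Set.union_subset h1 h2, ?_⟩
  rw [Finset.sup_union]
  exact sup_le_sup ha' hb'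

lemma compactIdeal_down {L : Type*} [CompleteLattice L] (x : L) :
    IsCompactIdeal L {a : L | CompleteLattice.IsCompactElement a ∧ a ≤ x} := by
  refine ⟨fun a ha => ha.1, ⟨⊥, isCompactElement_bot', bot_le⟩,
    fun a hc b hb hab => ⟨hc, hab.trans hb.2⟩, fun a ha b hb => ⟨isCompactElement_sup' ha.1 hb.1, sup_le ha.2 hb.2⟩⟩

lemma finset_sup_bound {L : Type*} [CompleteLattice L] {I : Set L} (hI : IsCompactIdeal L I)
    (t : Finset L) (ht : ↑t ⊆ I) : ∃ c ∈ I, t.sup id ≤ c := by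
  classical
  induction t using Finset.induction with
  | empty =>
    obtain ⟨c, hc⟩ := hI.2.1
    exact ⟨c, hc, by simp⟩
  | @insert x s hx ih =>
    obtain ⟨c, hc, hle⟩ := ih (fun y hy => ht (by simp [hy]))
    have hx : x ∈ I := ht (by simp)
    exact ⟨x ⊔ c, hI.2.2.2 _ hx _ hc, by simp [Finset.sup_insert, sup_le_sup_left hle]⟩

lemma ideal_eq_down {L : Type*} [CompleteLattice L] {I : Set L} (hI : IsCompactIdeal L I) :
    {a : L | CompleteLattice.IsCompactElement a ∧ a ≤ sSup I} = I := by
  ext a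
  constructor
  · rintro ⟨hc, hle⟩
    obtain ⟨t, hts, hat⟩ := hc I hle
    obtain ⟨c, hcI, hc'⟩ := finset_sup_bound hI t hts
    exact hI.2.2.1 a hc c hcI (hat.trans hc')
  · intro ha
    exact ⟨hI.1 a ha, le_sSup ha⟩

lemma sSup_down {L : Type*} [CompleteLattice L]
    (hgen : ∀ x : L, ∃ s : Set L,
      (∀ a ∈ s, CompleteLattice.IsCompactElement a) ∧ x = sSup s) (x : L) :
    sSup {a : L | CompleteLattice.IsCompactElement a ∧ a ≤ x} = x := by
  apply le_antisymm (sSup_le fun a ha => ha.2)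
  obtain ⟨s, hs, hx⟩ := hgen x
  rw [hx]
  exact sSup_le_sSup fun a ha => ⟨hs a ha, hx ▸ le_sSup ha⟩

/-- If every element of the complete lattice `L` is a supremum of compact elements,
then `x ↦ {s compact : s ≤ x}` is an order-isomorphism from `L` onto the set of
ideals of the semilattice of compact elements, ordered by inclusion. -/
theorem stmt0 (L : Type*) [CompleteLattice L]
    (hgen : ∀ x : L, ∃ s : Set L,
      (∀ a ∈ s, CompleteLattice.IsCompactElement a) ∧ x = sSup s) :
    ∃ e : L ≃o {I : Set L // IsCompactIdeal L I},
      ∀ x : L, (e x : Set L) = {a : L | CompleteLattice.IsCompactElement a ∧ a ≤ x} := by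
  refine ⟨{
    toFun := fun x => ⟨{a : L | CompleteLattice.IsCompactElement a ∧ a ≤ x},
      compactIdeal_down x⟩
    invFun := fun I => sSup (I : Set L)
    left_inv := fun x => sSup_down hgen x
    right_inv := fun I => Subtype.ext (ideal_eq_down I.2)
    map_rel_iff' := by
      intro x y
      simp only [Equiv.coe_fn_mk, Subtype.mk_le_mk, Set.le_eq_subset]
      constructor
      · intro h
        calc x = sSup {a : L | CompleteLattice.IsCompactElement a ∧ a ≤ x} :=
              (sSup_down hgen x).symm
          _ ≤ y := sSup_le fun a ha => (h ha).2
      · intro h a ha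
        exact ⟨ha.1, ha.2.trans h⟩ }, fun x => rfl⟩
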